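/- For the Wilson parameters (a,b,c,d) = (3/4, b, b-1/2, 1/4), the Jacobi coefficients are polynomials in n: α_n^W = (1/8)(n+1)(2n+4b-1) and β_n^W = (1/16)(8n² + 4(4b-1)n + 8b - 3), where α_n^W = sqrt(A_n C_{n+1}) and β_n^W = A_n + C_n - a² with A_n = (n+a+b)(n+a+c)(n+a+d)(n+a+b+c+d-1)/((2n+a+b+c+d-1)(2n+a+b+c+d)) and C_n = n(n+b+c-1)(n+b+d-1)(n+c+d-1)/((2n+a+b+c+d-2)(2n+a+b+c+d-1)). -/
import Mathlib
set_option maxHeartbeats 1600000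


/-- for the Wilson parameters `(a,b,c,d) = (3/4, b, b-1/2, 1/4)` with
`b > 1/4`, the Jacobi coefficients `α_n^W = sqrt(A_n C_{n+1})` and
`β_n^W = A_n + C_n - a²` are the polynomials `(1/8)(n+1)(2n+4b-1)` and
`(1/16)(8n² + 4(4b-1)n + 8b - 3)` respectively. -/
theorem stmt17 (b : ℝ) (hb : 1/4 < b) (a c d : ℝ)
    (ha : a = 3/4) (hc : c = b - 1/2) (hd : d = 1/4)
    (A C : ℕ → ℝ)
    (hA : ∀ n : ℕ, A n =
      (((n : ℝ) + a + b) * ((n : ℝ) + a + c) * ((n : ℝ) + a + d)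
          * ((n : ℝ) + a + b + c + d - 1)) /
        ((2 * (n : ℝ) + a + b + c + d - 1) * (2 * (n : ℝ) + a + b + c + d)))
    (hC : ∀ n : ℕ, C n =
      ((n : ℝ) * ((n : ℝ) + b + c - 1) * ((n : ℝ) + b + d - 1)
          * ((n : ℝ) + c + d - 1)) /
        ((2 * (n : ℝ) + a + b + c + d - 2) * (2 * (n : ℝ) + a + b + c + d - 1))) :
    (∀ n : ℕ, Real.sqrt (A n * C (n + 1)) =
      (1/8) * ((n : ℝ) + 1) * (2 * (n : ℝ) + 4 * b - 1)) ∧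
    (∀ n : ℕ, A n + C n - a ^ 2 =
      (1/16) * (8 * (n : ℝ) ^ 2 + 4 * (4 * b - 1) * (n : ℝ) + 8 * b - 3)) := by
  subst ha hc hd
  constructor
  · intro n
    have hn : (0:ℝ) ≤ (n:ℝ) := Nat.cast_nonneg n
    have h1 : (2 * (n : ℝ) + 3/4 + b + (b - 1/2) + 1/4 - 1) ≠ 0 := by nlinarith
    have h2 : (2 * (n : ℝ) + 3/4 + b + (b - 1/2) + 1/4) ≠ 0 := by nlinarith
    have h3 : (2 * ((n:ℝ)+1) + 3/4 + b + (b - 1/2) + 1/4 - 2) ≠ 0 := by nlinarith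
    have h4 : (2 * ((n:ℝ)+1) + 3/4 + b + (b - 1/2) + 1/4 - 1) ≠ 0 := by nlinarith
    have hne : ((2 * (n:ℝ) + 3/4 + b + (b - 1/2) + 1/4 - 1) *
        (2 * (n:ℝ) + 3/4 + b + (b - 1/2) + 1/4)) *
        ((2 * ((n:ℝ)+1) + 3/4 + b + (b - 1/2) + 1/4 - 2) *
        (2 * ((n:ℝ)+1) + 3/4 + b + (b - 1/2) + 1/4 - 1)) ≠ 0 := by
      apply mul_ne_zero (mul_ne_zero h1 h2)
      apply mul_ne_zero (by nlinarith) (by nlinarith)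
    have key : A n * C (n + 1) = ((1/8) * ((n : ℝ) + 1) * (2 * (n : ℝ) + 4 * b - 1))^2 := by
      rw [hA n, hC (n+1)]
      push_cast
      rw [div_mul_div_comm, div_eq_iff hne]
      ring
    rw [key, Real.sqrt_sq (by nlinarith)]
  · intro n
    match n with
    | 0 =>
      have hC0 : C 0 = 0 := by rw [hC 0]; push_cast; ring_nf
      have h1 : (2 * (0:ℝ) + 3/4 + b + (b - 1/2) + 1/4 - 1) ≠ 0 := by nlinarith
      have h2 : (2 * (0:ℝ) + 3/4 + b + (b - 1/2) + 1/4) ≠ 0 := by nlinarith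
      rw [sub_eq_iff_eq_add, hA 0, hC0]
      push_cast
      rw [add_zero, div_eq_iff (mul_ne_zero h1 h2)]
      ring
    | (m+1) =>
      have hn : (0:ℝ) ≤ (m:ℝ) := Nat.cast_nonneg m
      have h1 : (2 * ((m:ℝ)+1) + 3/4 + b + (b - 1/2) + 1/4 - 1) ≠ 0 := by nlinarith
      have h2 : (2 * ((m:ℝ)+1) + 3/4 + b + (b - 1/2) + 1/4) ≠ 0 := by nlinarith
      have h3 : (2 * ((m:ℝ)+1) + 3/4 + b + (b - 1/2) + 1/4 - 2) ≠ 0 := by nlinarith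
      rw [sub_eq_iff_eq_add, hA (m+1), hC (m+1)]
      push_cast
      rw [div_add_div _ _ (mul_ne_zero h1 h2) (mul_ne_zero h3 h1),
        div_eq_iff (mul_ne_zero (mul_ne_zero h1 h2) (mul_ne_zero h3 h1))]
      ring
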